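/- Let C(p) be the Coxeter–Schläfli matrix with rows (1, −cos(π/p), 0, 0), (−cos(π/p), 1, −1/2, 0), (0, −1/2, 1, −1/2), (0, 0, −1/2, 1) for p > 6, and let H = C(p)⁻¹ with entries h_{ij} (indices 1..4). Then the quantity (h₃₃·h₄₄ − h₃₄²)/(h₃₃·h₄₄) is strictly greater than 1, so cosh h(p) := sqrt((h₃₃·h₄₄ − h₃₄²)/(h₃₃·h₄₄)) defines a positive real number h(p). -/

import Mathlib

open Real

noncomputable def CoxeterSchlafli (p : ℝ) : Matrix (Fin 4) (Fin 4) ℝ :=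
  !![1, -Real.cos (π / p), 0, 0;
     -Real.cos (π / p), 1, -(1 / 2), 0;
     0, -(1 / 2), 1, -(1 / 2);
     0, 0, -(1 / 2), 1]

noncomputable def CSInv (c : ℝ) : Matrix (Fin 4) (Fin 4) ℝ :=
  let d : ℝ := 2 - 3 * c ^ 2
  !![2 / d, 3 * c / d, 2 * c / d, c / d;
     3 * c / d, 3 / d, 2 / d, 1 / d;
     2 * c / d, 2 / d, 4 * (1 - c ^ 2) / d, 2 * (1 - c ^ 2) / d;
     c / d, 1 / d, 2 * (1 - c ^ 2) / d, (3 - 4 * c ^ 2) / d]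

lemma cs_mul_inv (p : ℝ) (hd : 2 - 3 * Real.cos (π / p) ^ 2 ≠ 0) :
    CoxeterSchlafli p * CSInv (Real.cos (π / p)) = 1 := by
  set c := Real.cos (π / p)
  have hd' : (2:ℝ) - c ^ 2 * 3 ≠ 0 := by contrapose! hd; linarith
  ext i j
  fin_cases i <;> fin_cases j <;>
    simp [CoxeterSchlafli, CSInv, Matrix.mul_apply, Fin.sum_univ_four,
      Matrix.one_apply] <;>
    field_simp <;> ring

theorem hyperball_height_well_defined (p : ℝ) (hp : 6 < p) :
    let H := (CoxeterSchlafli p)⁻¹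
    1 < (H 2 2 * H 3 3 - (H 2 3) ^ 2) / (H 2 2 * H 3 3) ∧
    ∃ h : ℝ, 0 < h ∧
      Real.cosh h = Real.sqrt ((H 2 2 * H 3 3 - (H 2 3) ^ 2) / (H 2 2 * H 3 3)) := by
  intro H
  set c := Real.cos (π / p) with hc
  have hπp0 : 0 < π / p := div_pos Real.pi_pos (by linarith)
  have hπp6 : π / p < π / 6 := by
    apply div_lt_div_of_pos_left Real.pi_pos (by norm_num) hp
  have hc1 : c < 1 := by
    have h1 : Real.cos (π / p) < Real.cos 0 := by
      apply Real.cos_lt_cos_of_nonneg_of_le_pi le_rfl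
      · linarith [Real.pi_pos]
      · exact hπp0
    simpa [hc] using h1
  have hclb : Real.sqrt 3 / 2 < c := by
    have h1 : Real.cos (π / 6) < Real.cos (π / p) := by
      apply Real.cos_lt_cos_of_nonneg_of_le_pi hπp0.le
      · linarith [Real.pi_pos]
      · exact hπp6
    rwa [Real.cos_pi_div_six] at h1
  have hc0 : 0 < c := lt_trans (by positivity) hclb
  have hs3 : Real.sqrt 3 ^ 2 = 3 := Real.sq_sqrt (by norm_num)
  have hc2 : 3 / 4 < c ^ 2 := by nlinarith [Real.sqrt_nonneg 3]
  have hc2' : c ^ 2 < 1 := by nlinarith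
  have hd : 2 - 3 * c ^ 2 ≠ 0 := by nlinarith
  have hHeq : H = CSInv c := by
    exact Matrix.inv_eq_right_inv (cs_mul_inv p hd)
  have h22 : H 2 2 = 4 * (1 - c ^ 2) / (2 - 3 * c ^ 2) := by rw [hHeq]; simp [CSInv]
  have h33 : H 3 3 = (3 - 4 * c ^ 2) / (2 - 3 * c ^ 2) := by rw [hHeq]; simp [CSInv]
  have h23 : H 2 3 = 2 * (1 - c ^ 2) / (2 - 3 * c ^ 2) := by rw [hHeq]; simp [CSInv]
  have h34 : (3:ℝ) - 4 * c ^ 2 < 0 := by nlinarith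
  have h1c : (0:ℝ) < 1 - c ^ 2 := by nlinarith
  have hratio : (H 2 2 * H 3 3 - (H 2 3) ^ 2) / (H 2 2 * H 3 3)
      = (2 - 3 * c ^ 2) / (3 - 4 * c ^ 2) := by
    have hd34 : (3:ℝ) - 4 * c ^ 2 ≠ 0 := by nlinarith
    have h1c' : (1:ℝ) - c ^ 2 ≠ 0 := by nlinarith
    have hd' : (2:ℝ) - c ^ 2 * 3 ≠ 0 := by contrapose! hd; linarith
    rw [h22, h33, h23]
    field_simp
    ring
  have hgt : 1 < (2 - 3 * c ^ 2) / (3 - 4 * c ^ 2) := by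
    rw [lt_div_iff_of_neg h34]
    nlinarith
  constructor
  · rw [hratio]; exact hgt
  · rw [hratio]
    refine ⟨Real.arsinh (Real.sqrt ((2 - 3 * c ^ 2) / (3 - 4 * c ^ 2) - 1)), ?_, ?_⟩
    · rw [Real.arsinh_pos_iff]
      exact Real.sqrt_pos.mpr (by linarith)
    · rw [Real.cosh_arsinh, Real.sq_sqrt (by linarith)]
      congr 1
      ring
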